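/- arXiv:1712.04969 — 3 statements merged into one kernel-verified Lean document; each statement's English description precedes it below -/
import Mathlib

section
/- Let d₁* ∈ ℝ, c₁ ∈ [0,1], and define the coefficient functions by b₁(ν) = d₁*·cos((1−c₁)ν) and b̄₁(ν) = d₁*·(1−c₁)·sinc((1−c₁)ν) (the symplecticity condition). Let U : ℝ^d → ℝ be twice continuously differentiable and g = −∇U. Then the one-stage explicit ERKN integrator Φ_h is symplectic: at every point (q,p) ∈ ℝ^d × ℝ^d its derivative DΦ_h(q,p) preserves the canonical symplectic form, i.e. (DΦ_h(q,p))ᵀ J (DΦ_h(q,p)) = J, where J is the 2d×2d matrix with blocks J = [[0, I_d],[−I_d, 0]]. -/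
noncomputable section

/-- The (unnormalized) sinc function: `sinc x = sin x / x` for `x ≠ 0`, `sinc 0 = 1`. -/
def rsinc (x : ℝ) : ℝ := if x = 0 then 1 else Real.sin x / x

/-- Real coordinate space `ℝ^d` with the Euclidean norm. -/
abbrev Vec (d : ℕ) : Type := EuclideanSpace ℝ (Fin d)

/-- Block-diagonal scalar operator: multiplies the first `d₁` coordinates by `a`
and the remaining `d₂` coordinates by `b`.  This realizes `f(hΩ)` for
`Ω = diag(0·I_{d₁}, ω·I_{d₂})`, with `a = f 0` and `b = f (hω)`. -/
def bop (d₁ d₂ : ℕ) (a b : ℝ) (v : Vec (d₁ + d₂)) : Vec (d₁ + d₂) :=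
  WithLp.toLp 2 (fun i => (if (i : ℕ) < d₁ then a else b) * v i)

/-- One-stage explicit ERKN integrator `Φ_h` for `q'' + Ω²q = g(q)`:
`Q = cos(c₁hΩ)q + c₁h·sinc(c₁hΩ)p`,
`q⁺ = cos(hΩ)q + h·sinc(hΩ)p + h²·b̄₁(hΩ)g(Q)`,
`p⁺ = −hΩ²·sinc(hΩ)q + cos(hΩ)p + h·b₁(hΩ)g(Q)`. -/
def erkn (d₁ d₂ : ℕ) (h ω c₁ : ℝ) (bbar b₁ : ℝ → ℝ)
    (g : Vec (d₁ + d₂) → Vec (d₁ + d₂)) (x : Vec (d₁ + d₂) × Vec (d₁ + d₂)) :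
    Vec (d₁ + d₂) × Vec (d₁ + d₂) :=
  let q := x.1
  let p := x.2
  let Q := bop d₁ d₂ (Real.cos (c₁ * (h * 0))) (Real.cos (c₁ * (h * ω))) q
         + bop d₁ d₂ (c₁ * h * rsinc (c₁ * (h * 0))) (c₁ * h * rsinc (c₁ * (h * ω))) p
  ( bop d₁ d₂ (Real.cos (h * 0)) (Real.cos (h * ω)) q
    + bop d₁ d₂ (h * rsinc (h * 0)) (h * rsinc (h * ω)) p
    + bop d₁ d₂ (h ^ 2 * bbar (h * 0)) (h ^ 2 * bbar (h * ω)) (g Q),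
    bop d₁ d₂ (-(h * 0 ^ 2 * rsinc (h * 0))) (-(h * ω ^ 2 * rsinc (h * ω))) q
    + bop d₁ d₂ (Real.cos (h * 0)) (Real.cos (h * ω)) p
    + bop d₁ d₂ (h * b₁ (h * 0)) (h * b₁ (h * ω)) (g Q) )

/-! ### Auxiliary machinery -/

/-- `bop` as a continuous linear map. -/
def bopL (d₁ d₂ : ℕ) (a b : ℝ) : Vec (d₁ + d₂) →L[ℝ] Vec (d₁ + d₂) :=
  LinearMap.toContinuousLinearMap
    { toFun := bop d₁ d₂ a b
      map_add' := fun x y => by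
        ext i
        simp only [bop, PiLp.add_apply, PiLp.toLp_apply]
        show _ * (x i + y i) = _ * x i + _ * y i
        ring
      map_smul' := fun c x => by
        ext i
        simp only [bop, RingHom.id_apply, PiLp.smul_apply, PiLp.toLp_apply, smul_eq_mul]
        show _ * (c * x i) = c * (_ * x i)
        ring }

lemma bopL_apply (d₁ d₂ : ℕ) (a b : ℝ) (v : Vec (d₁ + d₂)) :
    bopL d₁ d₂ a b v = bop d₁ d₂ a b v := rfl

/-- First-block part of the inner ℝ product. -/
def B1 (d₁ d₂ : ℕ) (x y : Vec (d₁ + d₂)) : ℝ :=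
  ∑ i : Fin (d₁ + d₂), if (i : ℕ) < d₁ then x i * y i else 0

/-- Second-block part of the inner ℝ product. -/
def B2 (d₁ d₂ : ℕ) (x y : Vec (d₁ + d₂)) : ℝ :=
  ∑ i : Fin (d₁ + d₂), if (i : ℕ) < d₁ then 0 else x i * y i

lemma inner_eq_B (d₁ d₂ : ℕ) (x y : Vec (d₁ + d₂)) :
    (inner ℝ x y : ℝ) = B1 d₁ d₂ x y + B2 d₁ d₂ x y := by
  rw [PiLp.inner_apply, B1, B2, ← Finset.sum_add_distrib]
  refine Finset.sum_congr rfl fun i _ => ?_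
  simp only [RCLike.inner_apply, conj_trivial]
  split <;> ring

lemma inner_bop_left (d₁ d₂ : ℕ) (a b : ℝ) (x y : Vec (d₁ + d₂)) :
    (inner ℝ (bop d₁ d₂ a b x) y : ℝ) = a * B1 d₁ d₂ x y + b * B2 d₁ d₂ x y := by
  rw [PiLp.inner_apply, B1, B2, Finset.mul_sum, Finset.mul_sum, ← Finset.sum_add_distrib]
  refine Finset.sum_congr rfl fun i _ => ?_
  simp only [RCLike.inner_apply, conj_trivial, bop, PiLp.toLp_apply]
  split <;> ring

lemma inner_bop_right (d₁ d₂ : ℕ) (a b : ℝ) (x y : Vec (d₁ + d₂)) :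
    (inner ℝ x (bop d₁ d₂ a b y) : ℝ) = a * B1 d₁ d₂ x y + b * B2 d₁ d₂ x y := by
  rw [PiLp.inner_apply, B1, B2, Finset.mul_sum, Finset.mul_sum, ← Finset.sum_add_distrib]
  refine Finset.sum_congr rfl fun i _ => ?_
  simp only [RCLike.inner_apply, conj_trivial, bop, PiLp.toLp_apply]
  split <;> ring

lemma B1_bop_left (d₁ d₂ : ℕ) (a b : ℝ) (x y : Vec (d₁ + d₂)) :
    B1 d₁ d₂ (bop d₁ d₂ a b x) y = a * B1 d₁ d₂ x y := by
  rw [B1, B1, Finset.mul_sum]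
  refine Finset.sum_congr rfl fun i _ => ?_
  simp only [bop, PiLp.toLp_apply]
  split <;> ring

lemma B2_bop_left (d₁ d₂ : ℕ) (a b : ℝ) (x y : Vec (d₁ + d₂)) :
    B2 d₁ d₂ (bop d₁ d₂ a b x) y = b * B2 d₁ d₂ x y := by
  rw [B2, B2, Finset.mul_sum]
  refine Finset.sum_congr rfl fun i _ => ?_
  simp only [bop, PiLp.toLp_apply]
  split <;> ring

lemma B1_bop_right (d₁ d₂ : ℕ) (a b : ℝ) (x y : Vec (d₁ + d₂)) :
    B1 d₁ d₂ x (bop d₁ d₂ a b y) = a * B1 d₁ d₂ x y := by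
  rw [B1, B1, Finset.mul_sum]
  refine Finset.sum_congr rfl fun i _ => ?_
  simp only [bop, PiLp.toLp_apply]
  split <;> ring

lemma B2_bop_right (d₁ d₂ : ℕ) (a b : ℝ) (x y : Vec (d₁ + d₂)) :
    B2 d₁ d₂ x (bop d₁ d₂ a b y) = b * B2 d₁ d₂ x y := by
  rw [B2, B2, Finset.mul_sum]
  refine Finset.sum_congr rfl fun i _ => ?_
  simp only [bop, PiLp.toLp_apply]
  split <;> ring

/-- The key abstract algebraic computation behind symplecticity. -/
lemma key (d₁ d₂ : ℕ) (G : Vec (d₁ + d₂) →L[ℝ] Vec (d₁ + d₂))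
    (hG : ∀ x y : Vec (d₁ + d₂), (inner ℝ (G x) y : ℝ) = inner ℝ x (G y))
    (c0 c s0 s a0 a b0 b e0 e cc0 cc sc0 sc κ : ℝ)
    (hdet0 : c0 * c0 + s0 * a0 = 1) (hdet : c * c + s * a = 1)
    (h10 : b0 * c0 + e0 * a0 = κ * cc0) (h1 : b * c + e * a = κ * cc)
    (h20 : b0 * s0 - e0 * c0 = κ * sc0) (h2 : b * s - e * c = κ * sc)
    (u₁ u₂ v₁ v₂ : Vec (d₁ + d₂)) :
    (inner ℝ (bop d₁ d₂ c0 c u₁ + bop d₁ d₂ s0 s u₂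
        + bop d₁ d₂ e0 e (G (bop d₁ d₂ cc0 cc u₁ + bop d₁ d₂ sc0 sc u₂)))
      (bop d₁ d₂ (-a0) (-a) v₁ + bop d₁ d₂ c0 c v₂
        + bop d₁ d₂ b0 b (G (bop d₁ d₂ cc0 cc v₁ + bop d₁ d₂ sc0 sc v₂))) : ℝ)
    - (inner ℝ (bop d₁ d₂ (-a0) (-a) u₁ + bop d₁ d₂ c0 c u₂
        + bop d₁ d₂ b0 b (G (bop d₁ d₂ cc0 cc u₁ + bop d₁ d₂ sc0 sc u₂)))
      (bop d₁ d₂ c0 c v₁ + bop d₁ d₂ s0 s v₂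
        + bop d₁ d₂ e0 e (G (bop d₁ d₂ cc0 cc v₁ + bop d₁ d₂ sc0 sc v₂))) : ℝ)
    = (inner ℝ u₁ v₂ : ℝ) - (inner ℝ u₂ v₁ : ℝ) := by
  set Mu := G (bop d₁ d₂ cc0 cc u₁ + bop d₁ d₂ sc0 sc u₂) with hMu
  set Mv := G (bop d₁ d₂ cc0 cc v₁ + bop d₁ d₂ sc0 sc v₂) with hMv
  have hW : (inner ℝ (bop d₁ d₂ cc0 cc u₁ + bop d₁ d₂ sc0 sc u₂) Mv : ℝ)
      = inner ℝ Mu (bop d₁ d₂ cc0 cc v₁ + bop d₁ d₂ sc0 sc v₂) := by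
    rw [hMv, ← hG, hMu]
  simp only [inner_add_left, inner_add_right, inner_bop_left,
    inner_bop_right, B1_bop_left, B2_bop_left, B1_bop_right, B2_bop_right] at hW ⊢
  rw [inner_eq_B d₁ d₂ u₁ v₂, inner_eq_B d₁ d₂ u₂ v₁]
  linear_combination (B1 d₁ d₂ u₁ v₂ - B1 d₁ d₂ u₂ v₁) * hdet0
    + (B2 d₁ d₂ u₁ v₂ - B2 d₁ d₂ u₂ v₁) * hdet
    + (B1 d₁ d₂ u₁ Mv - B1 d₁ d₂ Mu v₁) * h10
    + (B2 d₁ d₂ u₁ Mv - B2 d₁ d₂ Mu v₁) * h1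
    + (B1 d₁ d₂ u₂ Mv - B1 d₁ d₂ Mu v₂) * h20
    + (B2 d₁ d₂ u₂ Mv - B2 d₁ d₂ Mu v₂) * h2
    + κ * hW

open InnerProductSpace in
/-- Symmetry of the derivative of the gradient of a `C²` function. -/
lemma grad_fderiv_symm (d : ℕ) (U : Vec d → ℝ) (hU : ContDiff ℝ 2 U) (x₀ : Vec d)
    (w z : Vec d) :
    (inner ℝ (fderiv ℝ (gradient U) x₀ w) z : ℝ) = inner ℝ w (fderiv ℝ (gradient U) x₀ z) := by
  have hgradC : ContDiff ℝ 1 (gradient U) := by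
    have h1 : ContDiff ℝ 1 (fderiv ℝ U) := hU.fderiv_right (by norm_num)
    exact ((toDual ℝ (Vec d)).symm.contDiff).comp h1
  have hdiff : DifferentiableAt ℝ (gradient U) x₀ :=
    (hgradC.differentiable one_ne_zero) x₀
  have hfd : DifferentiableAt ℝ (fderiv ℝ U) x₀ := by
    have h1 : ContDiff ℝ 1 (fderiv ℝ U) := hU.fderiv_right (by norm_num)
    exact (h1.differentiable one_ne_zero) x₀
  have claim : ∀ y : Vec d, (inner ℝ (fderiv ℝ (gradient U) x₀ y) : Vec d → ℝ)
      = fderiv ℝ (fderiv ℝ U) x₀ y := by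
    intro y
    funext z'
    have e1 : (fun x => (inner ℝ (gradient U x) z' : ℝ)) = fun x => fderiv ℝ U x z' :=
      funext fun x => InnerProductSpace.toDual_symm_apply
    have hA : HasFDerivAt (fun x => (inner ℝ (gradient U x) z' : ℝ))
        (((innerSL ℝ (E := Vec d)).flip z').comp (fderiv ℝ (gradient U) x₀)) x₀ :=
      (((innerSL ℝ (E := Vec d)).flip z').hasFDerivAt).comp x₀ hdiff.hasFDerivAt
    have hB : HasFDerivAt (fun x => fderiv ℝ U x z')
        ((ContinuousLinearMap.apply ℝ ℝ z').comp (fderiv ℝ (fderiv ℝ U) x₀)) x₀ :=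
      ((ContinuousLinearMap.apply ℝ ℝ z').hasFDerivAt).comp x₀ hfd.hasFDerivAt
    rw [e1] at hA
    have h4 := DFunLike.congr_fun (hA.unique hB) y
    simp only [ContinuousLinearMap.coe_comp', Function.comp_apply,
      ContinuousLinearMap.flip_apply, innerSL_apply_apply,
      ContinuousLinearMap.apply_apply] at h4
    exact h4
  have hsymm := (hU.contDiffAt (x := x₀)).isSymmSndFDerivAt (by simp)
  have h1 := congrFun (claim w) z
  have h2 := congrFun (claim z) w
  rw [h1, real_inner_comm, h2]
  exact hsymm w z

lemma grad_differentiable (d : ℕ) (U : Vec d → ℝ) (hU : ContDiff ℝ 2 U) :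
    Differentiable ℝ (gradient U) := by
  have h1 : ContDiff ℝ 1 (fderiv ℝ U) := hU.fderiv_right (by norm_num)
  exact (((InnerProductSpace.toDual ℝ (Vec d)).symm.contDiff).comp h1).differentiable one_ne_zero

/-- Under the symplecticity condition
`b₁(ν) = d₁*·cos((1−c₁)ν)`, `b̄₁(ν) = d₁*·(1−c₁)·sinc((1−c₁)ν)`, the ERKN integrator
with `g = −∇U` is symplectic: its derivative preserves the canonical symplectic
form `σ((q,p),(q',p')) = ⟨q,p'⟩ − ⟨p,q'⟩`. -/
theorem erkn_symplectic (d₁ d₂ : ℕ) (h ω : ℝ) (hh : 0 < h) (hω : 0 < ω)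
    (d₁star c₁ : ℝ) (hc₁ : c₁ ∈ Set.Icc (0 : ℝ) 1)
    (U : Vec (d₁ + d₂) → ℝ) (hU : ContDiff ℝ 2 U)
    (q p : Vec (d₁ + d₂)) :
    let Φ : Vec (d₁ + d₂) × Vec (d₁ + d₂) → Vec (d₁ + d₂) × Vec (d₁ + d₂) :=
      erkn d₁ d₂ h ω c₁ (fun ν => d₁star * (1 - c₁) * rsinc ((1 - c₁) * ν))
        (fun ν => d₁star * Real.cos ((1 - c₁) * ν)) (fun x => -gradient U x)
    let D := fderiv ℝ Φ (q, p)
    ∀ u v : Vec (d₁ + d₂) × Vec (d₁ + d₂),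
      (inner ℝ ((D u).1) ((D v).2) : ℝ) - (inner ℝ ((D u).2) ((D v).1) : ℝ)
        = (inner ℝ u.1 v.2 : ℝ) - (inner ℝ u.2 v.1 : ℝ) := by
  intro Φ D u v
  have hν : h * ω ≠ 0 := by positivity
  -- the scalar coefficients
  set c0 : ℝ := Real.cos (h * 0) with hc0
  set cv : ℝ := Real.cos (h * ω) with hcv
  set s0 : ℝ := h * rsinc (h * 0) with hs0
  set sv : ℝ := h * rsinc (h * ω) with hsv
  set a0 : ℝ := h * 0 ^ 2 * rsinc (h * 0) with ha0
  set av : ℝ := h * ω ^ 2 * rsinc (h * ω) with hav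
  set b0 : ℝ := h * (d₁star * Real.cos ((1 - c₁) * (h * 0))) with hb0
  set bv : ℝ := h * (d₁star * Real.cos ((1 - c₁) * (h * ω))) with hbv
  set e0 : ℝ := h ^ 2 * (d₁star * (1 - c₁) * rsinc ((1 - c₁) * (h * 0))) with he0
  set ev : ℝ := h ^ 2 * (d₁star * (1 - c₁) * rsinc ((1 - c₁) * (h * ω))) with hev
  set cc0 : ℝ := Real.cos (c₁ * (h * 0)) with hcc0
  set ccv : ℝ := Real.cos (c₁ * (h * ω)) with hccv
  set sc0 : ℝ := c₁ * h * rsinc (c₁ * (h * 0)) with hsc0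
  set scv : ℝ := c₁ * h * rsinc (c₁ * (h * ω)) with hscv
  -- the base point of the internal stage
  set Q₀ : Vec (d₁ + d₂) := bop d₁ d₂ cc0 ccv q + bop d₁ d₂ sc0 scv p with hQ₀
  have hgd := grad_differentiable _ U hU
  set GG : Vec (d₁ + d₂) →L[ℝ] Vec (d₁ + d₂) := -(fderiv ℝ (gradient U) Q₀) with hGG
  have hg : HasFDerivAt (fun x : Vec (d₁ + d₂) => -gradient U x) GG Q₀ := ((hgd Q₀).hasFDerivAt).neg
  have hGsym : ∀ x y : Vec (d₁ + d₂), (inner ℝ (GG x) y : ℝ) = inner ℝ x (GG y) := by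
    intro x y
    rw [hGG]
    simp only [ContinuousLinearMap.neg_apply, inner_neg_left, inner_neg_right]
    rw [grad_fderiv_symm _ U hU Q₀ x y]
  set fstL := ContinuousLinearMap.fst ℝ (Vec (d₁ + d₂)) (Vec (d₁ + d₂)) with hfstL
  set sndL := ContinuousLinearMap.snd ℝ (Vec (d₁ + d₂)) (Vec (d₁ + d₂)) with hsndL
  set Qc : Vec (d₁ + d₂) × Vec (d₁ + d₂) →L[ℝ] Vec (d₁ + d₂) :=
    (bopL d₁ d₂ cc0 ccv).comp fstL + (bopL d₁ d₂ sc0 scv).comp sndL with hQc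
  have hQ : HasFDerivAt
      (fun x : Vec (d₁ + d₂) × Vec (d₁ + d₂) => bop d₁ d₂ cc0 ccv x.1 + bop d₁ d₂ sc0 scv x.2) Qc (q, p) :=
    Qc.hasFDerivAt
  have hgQ : HasFDerivAt
      (fun x : Vec (d₁ + d₂) × Vec (d₁ + d₂) =>
        -gradient U (bop d₁ d₂ cc0 ccv x.1 + bop d₁ d₂ sc0 scv x.2))
      (GG.comp Qc) (q, p) := hg.comp (g := fun x : Vec (d₁ + d₂) => -gradient U x) (q, p) hQ
  have h1 : HasFDerivAt
      (fun x : Vec (d₁ + d₂) × Vec (d₁ + d₂) => bop d₁ d₂ c0 cv x.1 + bop d₁ d₂ s0 sv x.2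
        + bop d₁ d₂ e0 ev
            (-gradient U (bop d₁ d₂ cc0 ccv x.1 + bop d₁ d₂ sc0 scv x.2)))
      ((bopL d₁ d₂ c0 cv).comp fstL + (bopL d₁ d₂ s0 sv).comp sndL
        + (bopL d₁ d₂ e0 ev).comp (GG.comp Qc)) (q, p) :=
    ((((bopL d₁ d₂ c0 cv).comp fstL).hasFDerivAt).add
      (((bopL d₁ d₂ s0 sv).comp sndL).hasFDerivAt)).add
      ((bopL d₁ d₂ e0 ev).hasFDerivAt.comp (q, p) hgQ)
  have h2 : HasFDerivAt
      (fun x : Vec (d₁ + d₂) × Vec (d₁ + d₂) => bop d₁ d₂ (-a0) (-av) x.1 + bop d₁ d₂ c0 cv x.2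
        + bop d₁ d₂ b0 bv
            (-gradient U (bop d₁ d₂ cc0 ccv x.1 + bop d₁ d₂ sc0 scv x.2)))
      ((bopL d₁ d₂ (-a0) (-av)).comp fstL + (bopL d₁ d₂ c0 cv).comp sndL
        + (bopL d₁ d₂ b0 bv).comp (GG.comp Qc)) (q, p) :=
    ((((bopL d₁ d₂ (-a0) (-av)).comp fstL).hasFDerivAt).add
      (((bopL d₁ d₂ c0 cv).comp sndL).hasFDerivAt)).add
      ((bopL d₁ d₂ b0 bv).hasFDerivAt.comp (q, p) hgQ)
  have hΦD : HasFDerivAt Φ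
      (((bopL d₁ d₂ c0 cv).comp fstL + (bopL d₁ d₂ s0 sv).comp sndL
          + (bopL d₁ d₂ e0 ev).comp (GG.comp Qc)).prod
        ((bopL d₁ d₂ (-a0) (-av)).comp fstL + (bopL d₁ d₂ c0 cv).comp sndL
          + (bopL d₁ d₂ b0 bv).comp (GG.comp Qc))) (q, p) := h1.prodMk h2
  have hD : D = (((bopL d₁ d₂ c0 cv).comp fstL + (bopL d₁ d₂ s0 sv).comp sndL
          + (bopL d₁ d₂ e0 ev).comp (GG.comp Qc)).prod
        ((bopL d₁ d₂ (-a0) (-av)).comp fstL + (bopL d₁ d₂ c0 cv).comp sndL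
          + (bopL d₁ d₂ b0 bv).comp (GG.comp Qc))) := hΦD.fderiv
  rw [hD]
  simp only [ContinuousLinearMap.prod_apply, ContinuousLinearMap.add_apply,
    ContinuousLinearMap.coe_comp', Function.comp_apply, hfstL, hsndL,
    ContinuousLinearMap.coe_fst', ContinuousLinearMap.coe_snd', bopL_apply]
  -- scalar identities
  have Hdet0 : c0 * c0 + s0 * a0 = 1 := by
    rw [hc0, hs0, ha0]; norm_num [rsinc]
  have Hdet : cv * cv + sv * av = 1 := by
    rw [hcv, hsv, hav, rsinc, if_neg hν]
    field_simp
    linear_combination Real.sin_sq_add_cos_sq (h * ω)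
  have H10 : b0 * c0 + e0 * a0 = h * d₁star * cc0 := by
    rw [hb0, hc0, he0, ha0, hcc0]; norm_num [rsinc]
  have H20 : b0 * s0 - e0 * c0 = h * d₁star * sc0 := by
    rw [hb0, hs0, he0, hc0, hsc0]; norm_num [rsinc]; ring
  have H1 : bv * cv + ev * av = h * d₁star * ccv := by
    rw [hbv, hcv, hev, hav, hccv]
    rcases eq_or_ne c₁ 1 with hc | hc
    · subst hc; norm_num
    · have h1c : (1 - c₁) * (h * ω) ≠ 0 :=
        mul_ne_zero (sub_ne_zero.mpr (Ne.symm hc)) hν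
      have trig : Real.cos (c₁ * (h * ω))
          = Real.cos (h * ω) * Real.cos ((1 - c₁) * (h * ω))
            + Real.sin (h * ω) * Real.sin ((1 - c₁) * (h * ω)) := by
        rw [← Real.cos_sub]; congr 1; ring
      simp only [rsinc, if_neg h1c, if_neg hν]
      rw [trig]; field_simp
  have H2 : bv * sv - ev * cv = h * d₁star * scv := by
    rw [hbv, hsv, hev, hcv, hscv]
    rcases eq_or_ne c₁ 0 with hc0' | hc0'
    · subst hc0'
      norm_num [rsinc, hν]
      field_simp
      ring
    · rcases eq_or_ne c₁ 1 with hc1' | hc1'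
      · subst hc1'
        norm_num [rsinc, hν]
      · have h1c : (1 - c₁) * (h * ω) ≠ 0 :=
          mul_ne_zero (sub_ne_zero.mpr (Ne.symm hc1')) hν
        have hcc : c₁ * (h * ω) ≠ 0 := mul_ne_zero hc0' hν
        have trig : Real.sin (c₁ * (h * ω))
            = Real.sin (h * ω) * Real.cos ((1 - c₁) * (h * ω))
              - Real.cos (h * ω) * Real.sin ((1 - c₁) * (h * ω)) := by
          rw [← Real.sin_sub]; congr 1; ring
        simp only [rsinc, if_neg h1c, if_neg hν, if_neg hcc]
        rw [trig]; field_simp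
  exact key d₁ d₂ GG hGsym c0 cv s0 sv a0 av b0 bv e0 ev cc0 ccv sc0 scv
    (h * d₁star) Hdet0 Hdet H10 H1 H20 H2 u.1 u.2 v.1 v.2
end
end

section
/- Let Υ : ℝ → ℝ be an even function and g : ℝ^d → ℝ^d. For h > 0 define the trigonometric integrator Φ̂_h(q,p) = (q⁺,p⁺) by q⁺ = cos(hΩ)q + h·sinc(hΩ)p + (1/2)h²·sinc(hΩ)Υ(hΩ)g(q), p⁺ = −hΩ²·sinc(hΩ)q + cos(hΩ)p + (1/2)h·(cos(hΩ)Υ(hΩ)g(q) + Υ(hΩ)g(q⁺)), and let Φ̂_{−h} be the same scheme with h replaced by −h. Then Φ̂_h is symmetric: for every (q,p) ∈ ℝ^d × ℝ^d, Φ̂_{−h}(Φ̂_h(q,p)) = (q,p). -/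
noncomputable section

/-- The trigonometric integrator `Φ̂_h` with filter functions `Φ = 1`, `Ψ = sinc·Υ`,
`Ψ₀ = cos·Υ`, `Ψ₁ = Υ`. -/
def trig (d₁ d₂ : ℕ) (ω : ℝ) (Υ : ℝ → ℝ) (g : Vec (d₁ + d₂) → Vec (d₁ + d₂))
    (h : ℝ) (x : Vec (d₁ + d₂) × Vec (d₁ + d₂)) :
    Vec (d₁ + d₂) × Vec (d₁ + d₂) :=
  let q := x.1
  let p := x.2
  let qplus := bop d₁ d₂ (Real.cos (h * 0)) (Real.cos (h * ω)) q
      + bop d₁ d₂ (h * rsinc (h * 0)) (h * rsinc (h * ω)) p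
      + bop d₁ d₂ ((1/2) * h ^ 2 * rsinc (h * 0) * Υ (h * 0))
          ((1/2) * h ^ 2 * rsinc (h * ω) * Υ (h * ω)) (g q)
  ( qplus,
    bop d₁ d₂ (-(h * 0 ^ 2 * rsinc (h * 0))) (-(h * ω ^ 2 * rsinc (h * ω))) q
    + bop d₁ d₂ (Real.cos (h * 0)) (Real.cos (h * ω)) p
    + bop d₁ d₂ ((1/2) * h * Real.cos (h * 0) * Υ (h * 0))
        ((1/2) * h * Real.cos (h * ω) * Υ (h * ω)) (g q)
    + bop d₁ d₂ ((1/2) * h * Υ (h * 0)) ((1/2) * h * Υ (h * ω)) (g qplus) )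


lemma rsinc_zero : rsinc 0 = 1 := by simp [rsinc]

lemma rsinc_neg (x : ℝ) : rsinc (-x) = rsinc x := by
  rcases eq_or_ne x 0 with rfl | hx
  · simp
  · rw [rsinc, rsinc, if_neg (neg_ne_zero.mpr hx), if_neg hx, Real.sin_neg, neg_div_neg_eq]

lemma rsinc_key (x : ℝ) : Real.cos x ^ 2 + x ^ 2 * rsinc x ^ 2 = 1 := by
  rcases eq_or_ne x 0 with rfl | hx
  · simp [rsinc]
  · rw [rsinc, if_neg hx]
    field_simp
    try linarith [Real.sin_sq_add_cos_sq x]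

/-- For even `Υ`, the trigonometric integrator is symmetric:
`Φ̂_{−h} ∘ Φ̂_h = id`. -/
theorem trig_symmetric (d₁ d₂ : ℕ) (ω : ℝ) (hω : 0 < ω) (Υ : ℝ → ℝ)
    (hΥeven : ∀ ν : ℝ, Υ (-ν) = Υ ν)
    (g : Vec (d₁ + d₂) → Vec (d₁ + d₂)) (h : ℝ) (hh : 0 < h)
    (q p : Vec (d₁ + d₂)) :
    trig d₁ d₂ ω Υ g (-h) (trig d₁ d₂ ω Υ g h (q, p)) = (q, p) := by
  have hQ2 : (trig d₁ d₂ ω Υ g (-h) (trig d₁ d₂ ω Υ g h (q, p))).1 = q := by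
    ext i
    simp only [trig, bop, PiLp.toLp_apply, PiLp.add_apply, Pi.add_apply, mul_zero, neg_zero, neg_mul, Real.cos_zero,
      rsinc_zero, Real.cos_neg, rsinc_neg, hΥeven, neg_sq]
    rcases Nat.lt_or_ge (i : ℕ) d₁ with hi | hi
    · simp only [if_pos hi]; ring
    · simp only [if_neg (Nat.not_lt.mpr hi)]
      linear_combination (q i) * rsinc_key (h * ω)
  have hg : g ((trig d₁ d₂ ω Υ g (-h) (trig d₁ d₂ ω Υ g h (q, p))).1) = g q := by
    rw [hQ2]
  rw [Prod.ext_iff]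
  refine ⟨hQ2, ?_⟩
  simp only [trig] at hg ⊢
  rw [hg]
  ext i
  simp only [bop, PiLp.toLp_apply, PiLp.add_apply, Pi.add_apply, mul_zero, neg_zero, neg_mul, Real.cos_zero,
    rsinc_zero, Real.cos_neg, rsinc_neg, hΥeven, neg_sq]
  rcases Nat.lt_or_ge (i : ℕ) d₁ with hi | hi
  · simp only [if_pos hi]; ring
  · simp only [if_neg (Nat.not_lt.mpr hi)]
    linear_combination (p i + (1/2) * h * Υ (h * ω) * g q i) * rsinc_key (h * ω)
end
end

section
/- Suppose c₁ = 1/2 and the function Υ : ℝ → ℝ satisfies (1/2)·sinc(ν/2)·Υ(ν) = b̄₁(ν) and cos(ν/2)·Υ(ν) = b₁(ν) for ν ∈ {0, hω}. Then for every g : ℝ^d → ℝ^d the one-stage explicit symmetric ERKN integrator Φ_h and the trigonometric integrator Φ̂_h = Φ_{h/2,NL} ∘ Φ_{h,L} ∘ Φ_{h/2,NL} are conjugate: Φ_h = Φ_{−h/2,L} ∘ Φ_{−h/2,NL} ∘ Φ̂_h ∘ Φ_{h/2,NL} ∘ Φ_{h/2,L} as maps on ℝ^d × ℝ^d. -/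
noncomputable section

/-- Exact time-`t` flow `Φ_{t,L}` of the linear equation `q̇ = p`, `ṗ = −Ω²q`. -/
def phiL (d₁ d₂ : ℕ) (ω t : ℝ) (x : Vec (d₁ + d₂) × Vec (d₁ + d₂)) :
    Vec (d₁ + d₂) × Vec (d₁ + d₂) :=
  ( bop d₁ d₂ (Real.cos (t * 0)) (Real.cos (t * ω)) x.1
    + bop d₁ d₂ (t * rsinc (t * 0)) (t * rsinc (t * ω)) x.2,
    bop d₁ d₂ (-(t * 0 ^ 2 * rsinc (t * 0))) (-(t * ω ^ 2 * rsinc (t * ω))) x.1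
    + bop d₁ d₂ (Real.cos (t * 0)) (Real.cos (t * ω)) x.2 )

/-- Time-`t` flow `Φ_{t,NL}` of the nonlinear equation `q̇ = 0`, `ṗ = Υ(hΩ)g(q)`. -/
def phiNL (d₁ d₂ : ℕ) (h ω : ℝ) (Υ : ℝ → ℝ) (g : Vec (d₁ + d₂) → Vec (d₁ + d₂))
    (t : ℝ) (x : Vec (d₁ + d₂) × Vec (d₁ + d₂)) :
    Vec (d₁ + d₂) × Vec (d₁ + d₂) :=
  (x.1, x.2 + bop d₁ d₂ (t * Υ (h * 0)) (t * Υ (h * ω)) (g x.1))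


lemma rsinc_of_ne {x : ℝ} (hx : x ≠ 0) : rsinc x = Real.sin x / x := by simp [rsinc, hx]

lemma mul_rsinc {ω : ℝ} (hω : ω ≠ 0) (t : ℝ) :
    t * rsinc (t * ω) = Real.sin (t * ω) / ω := by
  rcases eq_or_ne t 0 with rfl | ht
  · simp [rsinc_zero]
  · rw [rsinc_of_ne (mul_ne_zero ht hω)]
    field_simp

lemma mul_sq_rsinc {ω : ℝ} (hω : ω ≠ 0) (t : ℝ) :
    t * ω ^ 2 * rsinc (t * ω) = ω * Real.sin (t * ω) := by
  rcases eq_or_ne t 0 with rfl | ht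
  · simp [rsinc_zero]
  · rw [rsinc_of_ne (mul_ne_zero ht hω)]
    field_simp

lemma bop_add (d₁ d₂ : ℕ) (a b : ℝ) (u v : Vec (d₁ + d₂)) :
    bop d₁ d₂ a b (u + v) = bop d₁ d₂ a b u + bop d₁ d₂ a b v := by
  ext i; simp [bop, mul_add, PiLp.add_apply]

lemma bop_bop (d₁ d₂ : ℕ) (a b c d : ℝ) (v : Vec (d₁ + d₂)) :
    bop d₁ d₂ a b (bop d₁ d₂ c d v) = bop d₁ d₂ (a*c) (b*d) v := by
  ext i; simp only [bop, PiLp.toLp_apply]; split <;> ring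

lemma bop_zero (d₁ d₂ : ℕ) (a b : ℝ) : bop d₁ d₂ a b 0 = 0 := by
  ext i; simp [bop]

lemma bop_congr {d₁ d₂ : ℕ} {a b a' b' : ℝ} (v : Vec (d₁ + d₂)) (ha : a = a') (hb : b = b') :
    bop d₁ d₂ a b v = bop d₁ d₂ a' b' v := by rw [ha, hb]

lemma phiNL_phiNL (d₁ d₂ : ℕ) (h ω : ℝ) (Υ : ℝ → ℝ) (g : Vec (d₁+d₂) → Vec (d₁+d₂))
    (s t : ℝ) (x : Vec (d₁+d₂) × Vec (d₁+d₂)) :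
    phiNL d₁ d₂ h ω Υ g s (phiNL d₁ d₂ h ω Υ g t x) = phiNL d₁ d₂ h ω Υ g (s+t) x := by
  simp only [phiNL]
  refine Prod.ext rfl ?_
  ext i
  simp only [bop, PiLp.add_apply, PiLp.toLp_apply]
  split <;> ring

lemma phiNL_zero (d₁ d₂ : ℕ) (h ω : ℝ) (Υ : ℝ → ℝ) (g : Vec (d₁+d₂) → Vec (d₁+d₂))
    (x : Vec (d₁+d₂) × Vec (d₁+d₂)) :
    phiNL d₁ d₂ h ω Υ g 0 x = x := by
  simp only [phiNL]
  refine Prod.ext rfl ?_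
  ext i
  simp [bop, PiLp.add_apply]

lemma phiL_add (d₁ d₂ : ℕ) (ω t : ℝ) (x y : Vec (d₁+d₂) × Vec (d₁+d₂)) :
    phiL d₁ d₂ ω t (x + y) = phiL d₁ d₂ ω t x + phiL d₁ d₂ ω t y := by
  refine Prod.ext ?_ ?_ <;>
  · ext i
    simp only [phiL, bop, Prod.fst_add, Prod.snd_add, PiLp.add_apply, PiLp.toLp_apply]
    split <;> ring

lemma phiL_phiL (d₁ d₂ : ℕ) {ω : ℝ} (s t : ℝ) (hω : ω ≠ 0)
    (x : Vec (d₁+d₂) × Vec (d₁+d₂)) :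
    phiL d₁ d₂ ω s (phiL d₁ d₂ ω t x) = phiL d₁ d₂ ω (s+t) x := by
  have e : (s+t) * ω = s * ω + t * ω := by ring
  refine Prod.ext ?_ ?_ <;>
  · ext i
    simp only [phiL, bop, PiLp.add_apply, PiLp.toLp_apply, mul_zero, Real.cos_zero, rsinc_zero, mul_one,
      mul_sq_rsinc hω, mul_rsinc hω]
    split
    · norm_num; try ring
    · rw [e, Real.cos_add, Real.sin_add]
      field_simp
      ring

/-- The symmetric ERKN integrator and the trigonometric integrator
`Φ̂_h = Φ_{h/2,NL} ∘ Φ_{h,L} ∘ Φ_{h/2,NL}` are conjugate: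
`Φ_h = Φ_{−h/2,L} ∘ Φ_{−h/2,NL} ∘ Φ̂_h ∘ Φ_{h/2,NL} ∘ Φ_{h/2,L}`. -/
theorem erkn_trig_conjugate (d₁ d₂ : ℕ) (h ω : ℝ) (hh : 0 < h) (hω : 0 < ω)
    (bbar b₁ Υ : ℝ → ℝ)
    (hΥ₁ : ∀ ν ∈ ({0, h * ω} : Set ℝ), (1/2) * rsinc (ν / 2) * Υ ν = bbar ν)
    (hΥ₂ : ∀ ν ∈ ({0, h * ω} : Set ℝ), Real.cos (ν / 2) * Υ ν = b₁ ν)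
    (g : Vec (d₁ + d₂) → Vec (d₁ + d₂)) :
    let Φhat : Vec (d₁ + d₂) × Vec (d₁ + d₂) → Vec (d₁ + d₂) × Vec (d₁ + d₂) :=
      fun y => phiNL d₁ d₂ h ω Υ g (h/2) (phiL d₁ d₂ ω h (phiNL d₁ d₂ h ω Υ g (h/2) y))
    ∀ x : Vec (d₁ + d₂) × Vec (d₁ + d₂),
      erkn d₁ d₂ h ω (1/2) bbar b₁ g x
        = phiL d₁ d₂ ω (-(h/2)) (phiNL d₁ d₂ h ω Υ g (-(h/2))
            (Φhat (phiNL d₁ d₂ h ω Υ g (h/2) (phiL d₁ d₂ ω (h/2) x)))) := by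
  intro Φhat x
  have hω0 : ω ≠ 0 := ne_of_gt hω
  have hΥ0₁ := hΥ₁ 0 (Set.mem_insert _ _)
  have hΥω₁ := hΥ₁ (h*ω) (Set.mem_insert_of_mem _ rfl)
  have hΥ0₂ := hΥ₂ 0 (Set.mem_insert _ _)
  have hΥω₂ := hΥ₂ (h*ω) (Set.mem_insert_of_mem _ rfl)
  simp only [zero_div, rsinc_zero, mul_one, one_mul, Real.cos_zero] at hΥ0₁ hΥ0₂
  simp only [Φhat]
  rw [phiNL_phiNL, phiNL_phiNL,
      show -(h/2) + h/2 = (0:ℝ) by ring,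
      show h/2 + h/2 = h by ring,
      phiNL_zero,
      phiL_phiL d₁ d₂ (-(h/2)) h hω0,
      show -(h/2) + h = h/2 by ring]
  have hz : phiNL d₁ d₂ h ω Υ g h (phiL d₁ d₂ ω (h/2) x)
      = phiL d₁ d₂ ω (h/2) x
        + ((0 : Vec (d₁+d₂)), bop d₁ d₂ (h * Υ (h*0)) (h * Υ (h*ω))
            (g (phiL d₁ d₂ ω (h/2) x).1)) := by
    simp [phiNL, Prod.ext_iff]
  rw [hz, phiL_add, phiL_phiL d₁ d₂ (h/2) (h/2) hω0,
      show h/2 + h/2 = h by ring]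
  have hA : bop d₁ d₂ (Real.cos ((1:ℝ)/2 * (h * 0))) (Real.cos (1/2 * (h * ω))) x.1
        + bop d₁ d₂ (1/2 * h * rsinc (1/2 * (h * 0))) (1/2 * h * rsinc (1/2 * (h * ω))) x.2
      = (phiL d₁ d₂ ω (h/2) x).1 := by
    simp only [phiL, mul_zero, Real.cos_zero, rsinc_zero, mul_one]
    refine congrArg₂ (· + ·) (bop_congr _ rfl ?_) (bop_congr _ (by ring) ?_)
    · rw [show (1:ℝ)/2 * (h*ω) = h/2*ω by ring]
    · rw [show (1:ℝ)/2 * (h*ω) = h/2*ω by ring]; ring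
  simp only [erkn]
  rw [hA]
  refine Prod.ext ?_ ?_ <;>
    simp only [phiL, Prod.fst_add, Prod.snd_add, bop_zero, zero_add, bop_bop]
  · congr 1
    refine bop_congr _ ?_ ?_
    · simp only [mul_zero, rsinc_zero, mul_one]
      rw [← hΥ0₁]; ring
    · rw [show h/2*ω = h*ω/2 by ring, ← hΥω₁]; ring
  · congr 1
    refine bop_congr _ ?_ ?_
    · simp only [mul_zero, Real.cos_zero]
      rw [← hΥ0₂]; ring
    · rw [show h/2*ω = h*ω/2 by ring, ← hΥω₂]; ring
end
end
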